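/- For the averaged iteration p_{t+1} = (1/(t+1))F(p_t) + (1−1/(t+1))p_t with p₀ = (0,0) and F as in Example 1, for all t ≥ 1 the first coordinate p_t¹ satisfies 10 − 10/t ≤ p_t¹ ≤ 10 + 7/(4t); hence p_t¹ → 10. -/

import Mathlib

/-- The piecewise-constant expected-closing-price map of Example 1. -/
noncomputable def exF (p : ℝ × ℝ) : ℝ × ℝ :=
  if 20 ≤ p.1 + p.2 then
    (if p.1 ≤ p.2 then (1, 0) else (0, 1))
  else
    (if p.1 ≤ p.2 then (11.5, 11) else (11, 11.5))

/-- The averaged price-prediction iteration `p₀ = (0,0)`,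
`p_{t+1} = (1/(t+1))·F(p_t) + (1 − 1/(t+1))·p_t`. -/
noncomputable def exSeq : ℕ → ℝ × ℝ
  | 0 => (0, 0)
  | t + 1 => (1 / ((t : ℝ) + 1)) • exF (exSeq t) + (1 - 1 / ((t : ℝ) + 1)) • exSeq t


lemma exSeq_succ_fst (t : ℕ) :
    ((t:ℝ)+1) * (exSeq (t+1)).1 = (exF (exSeq t)).1 + t * (exSeq t).1 := by
  have h : ((t:ℝ)+1) ≠ 0 := by positivity
  show ((t:ℝ)+1) * ((1 / ((t : ℝ) + 1)) • exF (exSeq t)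
      + (1 - 1 / ((t : ℝ) + 1)) • exSeq t).1 = _
  simp only [Prod.fst_add, Prod.smul_fst, smul_eq_mul]
  field_simp
  ring

lemma exSeq_succ_snd (t : ℕ) :
    ((t:ℝ)+1) * (exSeq (t+1)).2 = (exF (exSeq t)).2 + t * (exSeq t).2 := by
  have h : ((t:ℝ)+1) ≠ 0 := by positivity
  show ((t:ℝ)+1) * ((1 / ((t : ℝ) + 1)) • exF (exSeq t)
      + (1 - 1 / ((t : ℝ) + 1)) • exSeq t).2 = _
  simp only [Prod.snd_add, Prod.smul_snd, smul_eq_mul]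
  field_simp
  ring

lemma exSeq_inv (t : ℕ) (ht : 1 ≤ t) :
    -19 ≤ (t:ℝ) * (exSeq t).1 + (t:ℝ) * (exSeq t).2 - 20*t ∧
    (t:ℝ) * (exSeq t).1 + (t:ℝ) * (exSeq t).2 - 20*t ≤ 5/2 ∧
    -1 ≤ (t:ℝ) * (exSeq t).1 - (t:ℝ) * (exSeq t).2 ∧
    (t:ℝ) * (exSeq t).1 - (t:ℝ) * (exSeq t).2 ≤ 1 := by
  induction t with
  | zero => omega
  | succ n ih =>
    rcases Nat.lt_or_ge n 1 with hn | hn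
    · interval_cases n
      norm_num [exSeq, exF]
    · obtain ⟨i1, i2, i3, i4⟩ := ih hn
      have hn0 : (0:ℝ) < n := by exact_mod_cast hn
      have e1 := exSeq_succ_fst n
      have e2 := exSeq_succ_snd n
      push_cast
      set p := exSeq n with hp
      rcases le_or_gt 20 (p.1 + p.2) with hs | hs <;>
        rcases le_or_gt p.1 p.2 with hd | hd
      · have hsum := mul_le_mul_of_nonneg_left hs hn0.le
        have hdiff := mul_le_mul_of_nonneg_left hd hn0.le
        simp only [exF, if_pos hs, if_pos hd] at e1 e2
        constructor; · linarith
        refine ⟨by linarith, by linarith, by linarith⟩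
      · have hsum := mul_le_mul_of_nonneg_left hs hn0.le
        have hdiff := mul_le_mul_of_nonneg_left hd.le hn0.le
        simp only [exF, if_pos hs, if_neg (not_le.mpr hd)] at e1 e2
        refine ⟨by linarith, by linarith, by linarith, by linarith⟩
      · have hsum := mul_le_mul_of_nonneg_left hs.le hn0.le
        have hdiff := mul_le_mul_of_nonneg_left hd hn0.le
        simp only [exF, if_neg (not_le.mpr hs), if_pos hd] at e1 e2
        norm_num at e1 e2
        refine ⟨by linarith, by linarith, by linarith, by linarith⟩
      · have hsum := mul_le_mul_of_nonneg_left hs.le hn0.le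
        have hdiff := mul_le_mul_of_nonneg_left hd.le hn0.le
        simp only [exF, if_neg (not_le.mpr hs), if_neg (not_le.mpr hd)] at e1 e2
        norm_num at e1 e2
        refine ⟨by linarith, by linarith, by linarith, by linarith⟩

lemma exSeq_bounds (t : ℕ) (ht : 1 ≤ t) :
    10 - 10 / (t : ℝ) ≤ (exSeq t).1 ∧ (exSeq t).1 ≤ 10 + 7 / (4 * (t : ℝ)) := by
  obtain ⟨i1, i2, i3, i4⟩ := exSeq_inv t ht
  have ht0 : (0:ℝ) < t := by exact_mod_cast ht
  have h4t : (0:ℝ) < 4 * t := by linarith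
  constructor
  · rw [sub_le_iff_le_add, ← sub_le_iff_le_add', le_div_iff₀ ht0]
    nlinarith
  · rw [← sub_le_iff_le_add', le_div_iff₀ h4t]
    nlinarith


/-- For all `t ≥ 1` the first coordinate of the iteration satisfies
`10 − 10/t ≤ p_t¹ ≤ 10 + 7/(4t)`; hence `p_t¹ → 10`. -/
theorem exSeq_fst_bounds :
    (∀ t : ℕ, 1 ≤ t → 10 - 10 / (t : ℝ) ≤ (exSeq t).1 ∧ (exSeq t).1 ≤ 10 + 7 / (4 * (t : ℝ))) ∧
      Filter.Tendsto (fun t => (exSeq t).1) Filter.atTop (nhds (10 : ℝ)) := by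
  refine ⟨exSeq_bounds, ?_⟩
  have hlo : Filter.Tendsto (fun t : ℕ => 10 - 10 / (t : ℝ)) Filter.atTop (nhds 10) := by
    have : Filter.Tendsto (fun t : ℕ => 10 / (t : ℝ)) Filter.atTop (nhds 0) :=
      Filter.Tendsto.div_atTop tendsto_const_nhds tendsto_natCast_atTop_atTop
    simpa using tendsto_const_nhds.sub this
  have hhi : Filter.Tendsto (fun t : ℕ => 10 + 7 / (4 * (t : ℝ))) Filter.atTop (nhds 10) := by
    have h4 : Filter.Tendsto (fun t : ℕ => 4 * (t : ℝ)) Filter.atTop Filter.atTop :=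
      Filter.Tendsto.const_mul_atTop (by norm_num) tendsto_natCast_atTop_atTop
    have : Filter.Tendsto (fun t : ℕ => 7 / (4 * (t : ℝ))) Filter.atTop (nhds 0) :=
      Filter.Tendsto.div_atTop tendsto_const_nhds h4
    simpa using tendsto_const_nhds.add this
  refine tendsto_of_tendsto_of_tendsto_of_le_of_le' hlo hhi ?_ ?_
  · filter_upwards [Filter.eventually_ge_atTop 1] with t ht using (exSeq_bounds t ht).1
  · filter_upwards [Filter.eventually_ge_atTop 1] with t ht using (exSeq_bounds t ht).2
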